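/- Let Q : ℝ → ℂ^{m×m} have locally integrable entries and let U_Q be the Carathéodory solution of U_Q' = (0, Q; −Q*, 0) U_Q, U_Q(0) = I_{2m}. Then U_Q conjugates N(Q) to i d/dx: for every locally absolutely continuous F : ℝ → ℂ^{2m}, N(Q)(U_Q F) = i U_Q F' almost everywhere on ℝ; equivalently U_Q^{−1} N(Q) U_Q = i (d/dx) I_{2m}. -/

import Mathlib

open MeasureTheory

noncomputable section

/-- Index set for `ℂ^{2m}`, split into the two `m`-blocks. -/
abbrev Idx (m : ℕ) := Sum (Fin m) (Fin m)

/-- `ℂ^{2m}` with its Euclidean (Hilbert space) structure. -/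
abbrev Vec (m : ℕ) := EuclideanSpace ℂ (Idx m)

/-- A function is locally absolutely continuous iff it is the indefinite integral of a
locally integrable function. -/
def LocAC {E : Type*} [NormedAddCommGroup E] [NormedSpace ℝ E] (F : ℝ → E) : Prop :=
  ∃ g : ℝ → E, LocallyIntegrable g volume ∧ ∀ x : ℝ, F x = F 0 + ∫ t in (0:ℝ)..x, g t

/-- The Dirac-type differential expression `M(Q)F = i (F₁' - Q F₂, -Q* F₁ - F₂')ᵀ`. -/
def Mop {m : ℕ} (Q : ℝ → Fin m → Fin m → ℂ) (F : ℝ → Vec m) : ℝ → Vec m := fun x => WithLp.toLp 2 <|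
  Sum.elim
    (fun i => Complex.I * (deriv (fun y => F y (Sum.inl i)) x - ∑ j, Q x i j * F x (Sum.inr j)))
    (fun i => Complex.I * (-(∑ j, (starRingEnd ℂ) (Q x j i) * F x (Sum.inl j))
        - deriv (fun y => F y (Sum.inr i)) x))

/-- The formally self-adjoint differential expression `N(Q)F = i (F₁' - Q F₂, Q* F₁ + F₂')ᵀ`. -/
def Nop {m : ℕ} (Q : ℝ → Fin m → Fin m → ℂ) (F : ℝ → Vec m) : ℝ → Vec m := fun x => WithLp.toLp 2 <|
  Sum.elim
    (fun i => Complex.I * (deriv (fun y => F y (Sum.inl i)) x - ∑ j, Q x i j * F x (Sum.inr j)))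
    (fun i => Complex.I * ((∑ j, (starRingEnd ℂ) (Q x j i) * F x (Sum.inl j))
        + deriv (fun y => F y (Sum.inr i)) x))

/-- The coefficient matrix `A = (0, Q; -Q*, 0)` of the initial value problem `U' = A U`. -/
def Amat {m : ℕ} (Q : ℝ → Fin m → Fin m → ℂ) : ℝ → Idx m → Idx m → ℂ := fun x a b =>
  match a, b with
  | Sum.inl i, Sum.inr j => Q x i j
  | Sum.inr i, Sum.inl j => -(starRingEnd ℂ) (Q x j i)
  | _, _ => 0

/-- `U` is the Carathéodory solution of `U' = (0, Q; -Q*, 0) U`, `U(0) = I_{2m}`: it is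
continuous and satisfies the corresponding integral equation. -/
def IsCarSol {m : ℕ} (Q : ℝ → Fin m → Fin m → ℂ) (U : ℝ → Idx m → Idx m → ℂ) : Prop :=
  (∀ a b, Continuous fun x => U x a b) ∧
    ∀ (x : ℝ) (a b : Idx m),
      U x a b = (if a = b then 1 else 0) + ∫ t in (0:ℝ)..x, ∑ c, Amat Q t a c * U t c b

/-- Multiplication of a vector in `ℂ^{2m}` by a `2m × 2m` matrix. -/
def mulVec' {m : ℕ} (A : Idx m → Idx m → ℂ) (v : Vec m) : Vec m := WithLp.toLp 2 fun a => ∑ c, A a c * v c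

/-- The derivative `F'` of a vector-valued function, taken entrywise. -/
def derivVec {m : ℕ} (F : ℝ → Vec m) : ℝ → Vec m := fun x => WithLp.toLp 2 fun a => deriv (fun y => F y a) x

section AuxLemmas

open Filter Topology Metric Set intervalIntegral


/-- Lebesgue differentiation: the indefinite integral of a locally integrable function
is differentiable a.e. with derivative the integrand. -/
lemma ae_hasDerivAt_integral {E : Type*} [NormedAddCommGroup E] [NormedSpace ℝ E]
    [CompleteSpace E] {g : ℝ → E} (hg : LocallyIntegrable g volume) :
    ∀ᵐ x ∂(volume : Measure ℝ), HasDerivAt (fun y => ∫ t in (0:ℝ)..y, g t) (g x) x := by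
  have hgi : ∀ a b : ℝ, IntervalIntegrable g volume a b := fun a b =>
    (hg.integrableOn_isCompact isCompact_uIcc).intervalIntegrable
  filter_upwards [IsUnifLocDoublingMeasure.ae_tendsto_average_norm_sub (volume : Measure ℝ) hg 1] with x hx
  have hδ : Tendsto (fun y : ℝ => |y - x|) (𝓝[≠] x) (𝓝[>] 0) := by
    rw [tendsto_nhdsWithin_iff]
    constructor
    · have h1 : Tendsto (fun y : ℝ => |y - x|) (𝓝 x) (𝓝 |x - x|) :=
        ((continuous_id.sub continuous_const).abs).tendsto x
      simpa using h1.mono_left nhdsWithin_le_nhds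
    · filter_upwards [self_mem_nhdsWithin] with y hy
      exact abs_pos.2 (sub_ne_zero.2 hy)
  have hmem : ∀ᶠ y in 𝓝[≠] x, x ∈ closedBall x (1 * |y - x|) := by
    filter_upwards [self_mem_nhdsWithin] with y _
    simpa using mul_nonneg zero_le_one (abs_nonneg (y - x))
  have havg : Tendsto (fun y : ℝ => ⨍ t in closedBall x |y - x|, ‖g t - g x‖)
      (𝓝[≠] x) (𝓝 0) := hx (fun _ => x) (fun y => |y - x|) hδ hmem
  rw [hasDerivAt_iff_tendsto, ← nhdsNE_sup_pure x, tendsto_sup]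
  constructor
  · apply squeeze_zero' (Eventually.of_forall fun y =>
      mul_nonneg (inv_nonneg.2 (norm_nonneg _)) (norm_nonneg _))
      ?_ (by simpa using havg.const_mul 2)
    filter_upwards [self_mem_nhdsWithin] with y hy
    have hr : 0 < |y - x| := abs_pos.2 (sub_ne_zero.2 hy)
    set r := |y - x| with hrdef
    set c := ⨍ t in closedBall x r, ‖g t - g x‖ with hcdef
    have hiOn : IntegrableOn (fun t => ‖g t - g x‖) (closedBall x r) volume :=
      ((hg.integrableOn_isCompact (isCompact_closedBall x r)).sub
        (integrableOn_const measure_closedBall_lt_top.ne)).norm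
    have hvol : (volume (closedBall x r)).toReal = 2 * r := by
      rw [Real.volume_closedBall, ENNReal.toReal_ofReal (by linarith)]
    have hint_eq : (∫ t in closedBall x r, ‖g t - g x‖) = 2 * r * c := by
      rw [hcdef, setAverage_eq, smul_eq_mul, ← hvol]
      have hne : (volume (closedBall x r)).toReal ≠ 0 := by rw [hvol]; positivity
      field_simp
      rfl
    have key : ‖(∫ t in (0:ℝ)..y, g t) - (∫ t in (0:ℝ)..x, g t) - (y - x) • g x‖
        ≤ 2 * r * c := by
      have e1 : (∫ t in (0:ℝ)..y, g t) - ∫ t in (0:ℝ)..x, g t = ∫ t in x..y, g t :=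
        integral_interval_sub_left (hgi 0 y) (hgi 0 x)
      have e2 : (y - x) • g x = ∫ _t in x..y, g x := (intervalIntegral.integral_const _).symm
      rw [e1, e2, ← intervalIntegral.integral_sub (hgi x y) intervalIntegrable_const]
      calc ‖∫ t in x..y, (g t - g x)‖ ≤ ∫ t in Set.uIoc x y, ‖g t - g x‖ :=
            intervalIntegral.norm_integral_le_integral_norm_uIoc
        _ ≤ ∫ t in closedBall x r, ‖g t - g x‖ := by
            apply setIntegral_mono_set hiOn
              (Eventually.of_forall fun t => norm_nonneg _)
            apply HasSubset.Subset.eventuallyLE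
            intro t ht
            have ht' : t ∈ uIcc x y := uIoc_subset_uIcc ht
            have := Real.dist_le_of_mem_uIcc ht' (left_mem_uIcc (a := x) (b := y))
            rw [mem_closedBall]
            rw [Real.dist_eq] at this ⊢
            rw [hrdef]
            calc |t - x| ≤ |x - y| := this
              _ = |y - x| := abs_sub_comm x y
        _ = 2 * r * c := hint_eq
    have hnorm : ‖y - x‖ = r := Real.norm_eq_abs _
    rw [hnorm]
    calc r⁻¹ * ‖(∫ t in (0:ℝ)..y, g t) - (∫ t in (0:ℝ)..x, g t) - (y - x) • g x‖
        ≤ r⁻¹ * (2 * r * c) := by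
          exact mul_le_mul_of_nonneg_left key (inv_nonneg.2 hr.le)
      _ = 2 * c := by field_simp
  · have h0 : ‖x - x‖⁻¹ * ‖(∫ t in (0:ℝ)..x, g t) - (∫ t in (0:ℝ)..x, g t)
        - (x - x) • g x‖ = 0 := by simp
    have := tendsto_pure_nhds (fun y : ℝ => ‖y - x‖⁻¹ *
      ‖(∫ t in (0:ℝ)..y, g t) - (∫ t in (0:ℝ)..x, g t) - (y - x) • g x‖) x
    simpa [h0] using this

lemma MeasureTheory.LocallyIntegrable.mul_cont {f g : ℝ → ℂ} (hf : LocallyIntegrable f volume)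
    (hg : Continuous g) : LocallyIntegrable (fun t => f t * g t) volume := by
  rw [locallyIntegrable_iff]
  intro k hk
  obtain ⟨C, hC⟩ := hk.exists_bound_of_continuousOn hg.continuousOn
  have : ∀ t, f t * g t = g t * f t := fun t => mul_comm _ _
  simp only [this]
  exact Integrable.bdd_mul (hf.integrableOn_isCompact hk)
    (hg.aestronglyMeasurable.restrict)
    ((ae_restrict_iff' hk.measurableSet).2 (Eventually.of_forall hC))

lemma MeasureTheory.LocallyIntegrable.conj' {f : ℝ → ℂ} (hf : LocallyIntegrable f volume) :
    LocallyIntegrable (fun t => (starRingEnd ℂ) (f t)) volume := by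
  intro x
  obtain ⟨s, hs, hint⟩ := hf x
  exact ⟨s, hs, (Complex.conjCLE.toContinuousLinearMap).integrable_comp hint⟩

end AuxLemmas

/-- `U_Q` conjugates `N(Q)` into `i d/dx`: for every locally absolutely
continuous `F : ℝ → ℂ^{2m}`, `N(Q)(U_Q F) = i U_Q F'` a.e. on `ℝ`. -/
theorem Nop_conjugated_to_i_ddx (m : ℕ) (Q : ℝ → Fin m → Fin m → ℂ)
    (hQ : ∀ i j, LocallyIntegrable (fun x => Q x i j) volume)
    (U : ℝ → Idx m → Idx m → ℂ) (hU : IsCarSol Q U)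
    (F : ℝ → Vec m) (hF : LocAC F) :
    ∀ᵐ x ∂(volume : Measure ℝ), ∀ a : Idx m,
      Nop Q (fun y => mulVec' (U y) (F y)) x a =
        Complex.I * ∑ c, U x a c * deriv (fun y => F y c) x := by
  obtain ⟨g, hgloc, hFg⟩ := hF
  -- a.e. differentiability of F
  have hFae : ∀ᵐ x ∂(volume : Measure ℝ), HasDerivAt F (g x) x := by
    have hFeq : F = fun y => F 0 + ∫ t in (0:ℝ)..y, g t := funext hFg
    filter_upwards [ae_hasDerivAt_integral hgloc] with x hx
    rw [hFeq]
    exact hx.const_add (F 0)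
  -- local integrability of the matrix ODE right-hand sides
  have hAU : ∀ a b : Idx m,
      LocallyIntegrable (fun t => ∑ c, Amat Q t a c * U t c b) volume := by
    intro a b
    apply MeasureTheory.locallyIntegrable_finset_sum
    intro c _
    cases a with
    | inl i =>
      cases c with
      | inl j => simpa [Amat] using locallyIntegrable_const (0 : ℂ)
      | inr j =>
        simpa [Amat] using (hQ i j).mul_cont (hU.1 (Sum.inr j) b)
    | inr i =>
      cases c with
      | inl j =>
        have : LocallyIntegrable (fun t => (starRingEnd ℂ) (Q t j i) * U t (Sum.inl j) b)
            volume := ((hQ j i).conj').mul_cont (hU.1 (Sum.inl j) b)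
        have e : (fun t => Amat Q t (Sum.inr i) (Sum.inl j) * U t (Sum.inl j) b) = -(fun t => (starRingEnd ℂ) (Q t j i) * U t (Sum.inl j) b) := by funext t; simp [Amat]
        show LocallyIntegrable (fun t => Amat Q t (Sum.inr i) (Sum.inl j) * U t (Sum.inl j) b) volume
        rw [e]; exact this.neg
      | inr j => simpa [Amat] using locallyIntegrable_const (0 : ℂ)
  -- a.e. differentiability of U entries
  have hUae : ∀ᵐ x ∂(volume : Measure ℝ), ∀ a b : Idx m,
      HasDerivAt (fun y => U y a b) (∑ c, Amat Q x a c * U x c b) x := by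
    rw [ae_all_iff]
    intro a
    rw [ae_all_iff]
    intro b
    have heq : (fun y => U y a b)
        = fun y => (if a = b then (1:ℂ) else 0) + ∫ t in (0:ℝ)..y, ∑ c, Amat Q t a c * U t c b :=
      funext fun y => hU.2 y a b
    filter_upwards [ae_hasDerivAt_integral (hAU a b)] with x hx
    rw [heq]
    exact hx.const_add _
  filter_upwards [hUae, hFae] with x hUx hFx
  intro a
  have hFc : ∀ c : Idx m, HasDerivAt (fun y => F y c) (g x c) x := by
    intro c
    exact (((EuclideanSpace.proj c : Vec m →L[ℂ] ℂ).restrictScalars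
      ℝ).hasFDerivAt.comp_hasDerivAt x hFx)
  have hFd : ∀ c : Idx m, deriv (fun y => F y c) x = g x c := fun c => (hFc c).deriv
  have hGd : ∀ a' : Idx m, deriv (fun y => ∑ c, U y a' c * F y c) x
      = ∑ c, ((∑ d, Amat Q x a' d * U x d c) * F x c + U x a' c * g x c) :=
    fun a' => (HasDerivAt.fun_sum fun c _ => (hUx a' c).mul (hFc c)).deriv
  cases a with
  | inl i =>
    simp only [Nop, mulVec', WithLp.ofLp_toLp, Sum.elim_inl]
    rw [hGd (Sum.inl i)]
    simp only [hFd]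
    have hcancel : ∑ c, (∑ d, Amat Q x (Sum.inl i) d * U x d c) * F x c
        = ∑ j, Q x i j * ∑ c, U x (Sum.inr j) c * F x c := by
      have inner : ∀ c : Idx m, (∑ d, Amat Q x (Sum.inl i) d * U x d c)
          = ∑ j, Q x i j * U x (Sum.inr j) c := by
        intro c
        rw [Fintype.sum_sum_type]
        simp [Amat]
      simp only [inner, Finset.sum_mul]
      rw [Finset.sum_comm]
      simp only [Finset.mul_sum, mul_assoc]
    rw [Finset.sum_add_distrib, hcancel]
    ring
  | inr i =>
    simp only [Nop, mulVec', WithLp.ofLp_toLp, Sum.elim_inr]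
    rw [hGd (Sum.inr i)]
    simp only [hFd]
    have hcancel : ∑ c, (∑ d, Amat Q x (Sum.inr i) d * U x d c) * F x c
        = -∑ j, (starRingEnd ℂ) (Q x j i) * ∑ c, U x (Sum.inl j) c * F x c := by
      have inner : ∀ c : Idx m, (∑ d, Amat Q x (Sum.inr i) d * U x d c)
          = -∑ j, (starRingEnd ℂ) (Q x j i) * U x (Sum.inl j) c := by
        intro c
        rw [Fintype.sum_sum_type]
        simp [Amat, Finset.sum_neg_distrib]
      simp only [inner, Finset.sum_mul, neg_mul, Finset.sum_neg_distrib]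
      rw [Finset.sum_comm]
      simp only [Finset.mul_sum, mul_assoc]
    rw [Finset.sum_add_distrib, hcancel]
    ring
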